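/- arXiv:2405.14682 — 2 statements merged into one kernel-verified Lean document; each statement's English description precedes it below -/
import Mathlib

section
/- Let J be a 3×3 real matrix all of whose complex eigenvalues have negative real part, let d₁, d₂, d₃ > 0 be reals, and for y ≥ 0 set J(y) = J − y·diag(d₁, d₂, d₃). Then there exist 0 < y₀ < y₁ such that for every y ∈ [0, y₀] and every y ≥ y₁, all complex eigenvalues of J(y) have negative real part. -/
open Matrix Polynomial

/-- The multiset of complex eigenvalues of a real 3×3 matrix, i.e. the roots of its
characteristic polynomial regarded as a polynomial over `ℂ`. -/
noncomputable def eigs (M : Matrix (Fin 3) (Fin 3) ℝ) : Multiset ℂ :=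
  (M.charpoly.map (algebraMap ℝ ℂ)).roots

section Helpers

lemma key_hurwitz (a b c : ℝ) (ha : 0 < a) (hc : 0 < c) (hab : c < a * b)
    (z : ℂ) (hz : z^3 + (a:ℂ) * z^2 + (b:ℂ) * z + (c:ℂ) = 0) : z.re < 0 := by
  have hb : 0 < b := by nlinarith
  obtain ⟨α, β⟩ := z
  have hre : (Complex.mk α β ^3 + (a:ℂ) * Complex.mk α β^2 + (b:ℂ) * Complex.mk α β + (c:ℂ)).re = 0 := by rw [hz]; simp
  have him : (Complex.mk α β^3 + (a:ℂ) * Complex.mk α β^2 + (b:ℂ) * Complex.mk α β + (c:ℂ)).im = 0 := by rw [hz]; simp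
  simp only [pow_succ, pow_zero, one_mul, Complex.mul_re, Complex.mul_im, Complex.add_re,
    Complex.add_im, Complex.ofReal_re, Complex.ofReal_im] at hre him ⊢
  show α < 0
  by_contra h
  push_neg at h
  by_cases hβ0 : β = 0
  · subst hβ0
    simp at hre
    nlinarith [pow_nonneg h 3, mul_nonneg ha.le (mul_nonneg h h), mul_nonneg hb.le h]
  · have hfac : β * (3*α^2 - β^2 + 2*a*α + b) = 0 := by linear_combination him
    have hβ2 : β^2 = 3*α^2 + 2*a*α + b := by
      rcases mul_eq_zero.1 hfac with h' | h'
      · exact absurd h' hβ0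
      · linarith
    have hre2 : 8*α^3 + 8*a*α^2 + (2*b+2*a^2)*α + a*b - c = 0 := by
      linear_combination (-1:ℝ)*hre + (-(3*α+a))*hβ2
    nlinarith [pow_nonneg h 3, mul_nonneg ha.le (mul_nonneg h h),
      mul_nonneg (by positivity : (0:ℝ) ≤ 2*b+2*a^2) h]

lemma forward_real (a b c x y u : ℝ)
    (h1 : a = -(x + y + u)) (h2 : b = x*y + x*u + y*u) (h3 : c = -(x*y*u))
    (hx : x < 0) (hy : y < 0) (hu : u < 0) :
    0 < a ∧ 0 < c ∧ c < a * b := by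
  refine ⟨by linarith, ?_, ?_⟩
  · rw [h3]; nlinarith [mul_pos (mul_pos (neg_pos.2 hx) (neg_pos.2 hy)) (neg_pos.2 hu)]
  · have key : a * b - c = -((x+y)*(x+u)*(y+u)) := by rw [h1, h2, h3]; ring
    nlinarith [mul_pos (mul_pos (neg_pos.2 (by linarith : x+y<0)) (neg_pos.2 (by linarith : x+u<0))) (neg_pos.2 (by linarith : y+u<0))]

lemma forward_core (a b c x : ℝ) (z : ℂ)
    (h1 : (a:ℂ) = -((x:ℂ) + z + (starRingEnd ℂ) z))
    (h2 : (b:ℂ) = (x:ℂ)*z + (x:ℂ)*((starRingEnd ℂ) z) + z*((starRingEnd ℂ) z))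
    (h3 : (c:ℂ) = -((x:ℂ)*z*((starRingEnd ℂ) z)))
    (hx : x < 0) (hz : z.re < 0) :
    0 < a ∧ 0 < c ∧ c < a * b := by
  obtain ⟨α, β⟩ := z
  have e1 : a = -(x + 2*α) := by
    have := congrArg Complex.re h1
    simp [Complex.add_re, Complex.conj_re] at this
    linarith
  have e2 : b = 2*x*α + (α^2 + β^2) := by
    have := congrArg Complex.re h2
    simp [Complex.mul_re, Complex.add_re, Complex.conj_re, Complex.conj_im] at this
    nlinarith [this]
  have e3 : c = -(x * (α^2 + β^2)) := by
    have := congrArg Complex.re h3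
    simp [Complex.mul_re, Complex.add_re, Complex.conj_re, Complex.conj_im] at this
    nlinarith [this]
  have hα : α < 0 := hz
  have hm : 0 < α^2 + β^2 := by nlinarith [sq_nonneg β, mul_pos (neg_pos.2 hα) (neg_pos.2 hα)]
  refine ⟨by rw [e1]; linarith, by rw [e3]; nlinarith, ?_⟩
  have key : a * b - c = -(2*α*((x+α)^2 + β^2)) := by rw [e1, e2, e3]; ring
  nlinarith [sq_nonneg (x+α), sq_nonneg β, mul_pos (neg_pos.2 hα) (by nlinarith [sq_nonneg β, mul_pos (neg_pos.2 (by linarith : x+α<0)) (neg_pos.2 (by linarith : x+α<0))] : (0:ℝ) < (x+α)^2 + β^2)]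

lemma cubic_real_root (a b c : ℝ) : ∃ x : ℝ, x^3 + a*x^2 + b*x + c = 0 := by
  set f : ℝ → ℝ := fun x => x^3 + a*x^2 + b*x + c with hf
  have hcont : Continuous f := by continuity
  set R : ℝ := 1 + |a| + |b| + |c| with hR
  have hR1 : 1 ≤ R := by
    have := abs_nonneg a; have := abs_nonneg b; have := abs_nonneg c; linarith
  have hfR : 0 ≤ f R := by
    show 0 ≤ R^3 + a*R^2 + b*R + c
    nlinarith [neg_abs_le a, neg_abs_le b, neg_abs_le c, abs_nonneg a, abs_nonneg b,
      abs_nonneg c, sq_nonneg R, mul_le_mul_of_nonneg_left (neg_abs_le b) (sq_nonneg R)]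
  have hfmR : f (-R) ≤ 0 := by
    show (-R)^3 + a*(-R)^2 + b*(-R) + c ≤ 0
    have hRsq : (1:ℝ) ≤ R^2 := by nlinarith
    have h5 : (1 + |a| + |b| + |c|) * R^2 ≤ R^3 := by nlinarith [sq_nonneg R]
    have h1 : a * R^2 ≤ |a| * R^2 := mul_le_mul_of_nonneg_right (le_abs_self a) (sq_nonneg R)
    have hRR : R ≤ R^2 := by nlinarith
    have hR0 : (0:ℝ) ≤ R := by linarith
    have h3 : |b| * R ≤ |b| * R^2 := mul_le_mul_of_nonneg_left hRR (abs_nonneg b)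
    have h4 : |c| ≤ |c| * R^2 := by nlinarith [abs_nonneg c]
    have h2 : -(b*R) ≤ |b| * R := by nlinarith [neg_abs_le b]
    nlinarith [le_abs_self c]
  have hsub : Set.Icc (f (-R)) (f R) ⊆ f '' Set.Icc (-R) R :=
    intermediate_value_Icc (by linarith) hcont.continuousOn
  obtain ⟨x, -, hx⟩ := hsub ⟨hfmR, hfR⟩
  exact ⟨x, hx⟩

lemma forward_helper (a b c : ℝ) (z₁ z₂ z₃ : ℂ)
    (h1 : (a:ℂ) = -(z₁ + z₂ + z₃)) (h2 : (b:ℂ) = z₁*z₂ + z₁*z₃ + z₂*z₃)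
    (h3 : (c:ℂ) = -(z₁*z₂*z₃))
    (hr1 : z₁.re < 0) (hr2 : z₂.re < 0) (hr3 : z₃.re < 0)
    (him : z₁.im = 0) : 0 < a ∧ 0 < c ∧ c < a * b := by
  have hz1 : z₁ = ((z₁.re : ℝ) : ℂ) := by
    apply Complex.ext <;> simp [him]
  set x := z₁.re with hx
  by_cases h2im : z₂.im = 0
  · -- all real
    have h3im : z₃.im = 0 := by
      have := congrArg Complex.im h1
      simp [him, h2im] at this
      linarith
    have hz2 : z₂ = ((z₂.re : ℝ) : ℂ) := by apply Complex.ext <;> simp [h2im]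
    have hz3 : z₃ = ((z₃.re : ℝ) : ℂ) := by apply Complex.ext <;> simp [h3im]
    refine forward_real a b c x z₂.re z₃.re ?_ ?_ ?_ hr1 hr2 hr3
    · have : (a:ℂ) = ((-(x + z₂.re + z₃.re) : ℝ) : ℂ) :=
        h1.trans (by rw [hz1, hz2, hz3]; simp only [Complex.ofReal_re]; push_cast; ring)
      exact_mod_cast this
    · have : (b:ℂ) = ((x * z₂.re + x * z₃.re + z₂.re * z₃.re : ℝ) : ℂ) :=
        h2.trans (by rw [hz1, hz2, hz3]; simp only [Complex.ofReal_re]; push_cast; ring)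
      exact_mod_cast this
    · have : (c:ℂ) = ((-(x * z₂.re * z₃.re) : ℝ) : ℂ) :=
        h3.trans (by rw [hz1, hz2, hz3]; simp only [Complex.ofReal_re]; push_cast; ring)
      exact_mod_cast this
  · -- z₂ nonreal; show z₃ = conj z₂
    have hsum : (z₂ + z₃).im = 0 := by
      have := congrArg Complex.im h1
      simp [him] at this
      simp [Complex.add_im]; linarith
    have hprod : (z₂ * z₃).im = 0 := by
      have := congrArg Complex.im h2
      rw [hz1] at this
      simp [Complex.add_im, Complex.mul_im, Complex.ofReal_im, Complex.ofReal_re] at this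
      simp [Complex.mul_im]
      simp [Complex.add_im] at hsum
      nlinarith [this, hsum]
    have hconj : z₃ = (starRingEnd ℂ) z₂ := by
      simp [Complex.add_im] at hsum
      simp [Complex.mul_im] at hprod
      apply Complex.ext
      · simp [Complex.conj_re]
        have hβ : z₃.im = -z₂.im := by linarith
        rw [hβ] at hprod
        field_simp at hprod
        rcases mul_eq_zero.1 (by linarith [hprod] : z₂.im * (z₃.re - z₂.re) = 0) with h | h
        · exact absurd h h2im
        · linarith
      · simp [Complex.conj_im]; linarith
    rw [hconj] at h1 h2 h3
    exact forward_core a b c x z₂ (by rw [← hz1] at *; exact h1.trans (by ring))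
      (by rw [← hz1] at *; exact h2.trans (by ring)) (by rw [← hz1] at *; exact h3.trans (by ring)) hr1 hr2

lemma forward_hurwitz (a b c : ℝ) (z₁ z₂ z₃ : ℂ)
    (h1 : (a:ℂ) = -(z₁ + z₂ + z₃)) (h2 : (b:ℂ) = z₁*z₂ + z₁*z₃ + z₂*z₃)
    (h3 : (c:ℂ) = -(z₁*z₂*z₃))
    (hr1 : z₁.re < 0) (hr2 : z₂.re < 0) (hr3 : z₃.re < 0) :
    0 < a ∧ 0 < c ∧ c < a * b := by
  by_cases e1 : z₁.im = 0
  · exact forward_helper a b c z₁ z₂ z₃ h1 h2 h3 hr1 hr2 hr3 e1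
  by_cases e2 : z₂.im = 0
  · exact forward_helper a b c z₂ z₁ z₃ (h1.trans (by ring)) (h2.trans (by ring))
      (h3.trans (by ring)) hr2 hr1 hr3 e2
  by_cases e3 : z₃.im = 0
  · exact forward_helper a b c z₃ z₁ z₂ (h1.trans (by ring)) (h2.trans (by ring))
      (h3.trans (by ring)) hr3 hr1 hr2 e3
  · exfalso
    obtain ⟨x, hx⟩ := cubic_real_root a b c
    have hfac : ((x:ℂ) - z₁) * ((x:ℂ) - z₂) * ((x:ℂ) - z₃) = 0 := by
      have heq : ((x:ℂ) - z₁) * ((x:ℂ) - z₂) * ((x:ℂ) - z₃)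
          = (x:ℂ)^3 + (a:ℂ)*(x:ℂ)^2 + (b:ℂ)*(x:ℂ) + (c:ℂ) := by
        rw [h1, h2, h3]; ring
      rw [heq]
      have : ((x:ℝ)^3 + a*x^2 + b*x + c : ℝ) = 0 := hx
      exact_mod_cast congrArg (fun t : ℝ => (t : ℂ)) this
    rcases mul_eq_zero.1 hfac with h | h
    · rcases mul_eq_zero.1 h with h | h
      · exact e1 (by have : z₁ = (x:ℂ) := by linear_combination -h
                     rw [this]; simp)
      · exact e2 (by have : z₂ = (x:ℂ) := by linear_combination -h
                     rw [this]; simp)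
    · exact e3 (by have : z₃ = (x:ℂ) := by linear_combination -h
                   rw [this]; simp)

lemma charpoly_fin3 (M : Matrix (Fin 3) (Fin 3) ℝ) :
    M.charpoly = X^3 + C (-(M 0 0 + M 1 1 + M 2 2)) * X^2
      + C (M 0 0*M 1 1 - M 0 1*M 1 0 + M 0 0*M 2 2 - M 0 2*M 2 0 + M 1 1*M 2 2 - M 1 2*M 2 1) * X
      + C (-(M 0 0*M 1 1*M 2 2 - M 0 0*M 1 2*M 2 1 - M 0 1*M 1 0*M 2 2
            + M 0 1*M 1 2*M 2 0 + M 0 2*M 1 0*M 2 1 - M 0 2*M 1 1*M 2 0)) := by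
  rw [Matrix.charpoly, Matrix.det_fin_three]
  simp [Matrix.charmatrix_apply_eq, Matrix.charmatrix_apply_ne, _root_.map_add, _root_.map_mul,
    _root_.map_sub, _root_.map_neg]
  ring

lemma monic_cubic (a b c : ℂ) : (X^3 + C a*X^2 + C b*X + C c).Monic := by
  monicity!

lemma natDegree_cubic (a b c : ℂ) : (X^3 + C a*X^2 + C b*X + C c).natDegree = 3 := by
  compute_degree!

lemma cubic_coeff_extract (A B C' A' B' C'' : ℂ)
    (h : X^3 + C A*X^2 + C B*X + C C' = X^3 + C A'*X^2 + C B'*X + C C'') :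
    A = A' ∧ B = B' ∧ C' = C'' := by
  refine ⟨?_, ?_, ?_⟩
  · have := congrArg (fun p => coeff p 2) h
    simpa [coeff_add, coeff_C_mul, coeff_X_pow, coeff_C] using this
  · have := congrArg (fun p => coeff p 1) h
    simpa [coeff_add, coeff_C_mul, coeff_X_pow, coeff_C] using this
  · have := congrArg (fun p => coeff p 0) h
    simpa [coeff_add, coeff_C_mul, coeff_X_pow, coeff_C] using this

lemma roots_cubic (a b c : ℂ) :
    ∃ z₁ z₂ z₃ : ℂ, (X^3 + C a*X^2 + C b*X + C c).roots = {z₁, z₂, z₃} ∧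
      a = -(z₁+z₂+z₃) ∧ b = z₁*z₂+z₁*z₃+z₂*z₃ ∧ c = -(z₁*z₂*z₃) := by
  set q : Polynomial ℂ := X^3 + C a*X^2 + C b*X + C c with hq
  have hmon := monic_cubic a b c
  have hsp : q.Splits := IsAlgClosed.splits q
  have hcard : q.roots.card = 3 := by
    rw [(Polynomial.splits_iff_card_roots).1 hsp]
    exact natDegree_cubic a b c
  obtain ⟨z₁, z₂, z₃, hroots⟩ := Multiset.card_eq_three.1 hcard
  have hprod := hsp.eq_prod_roots_of_monic hmon
  rw [hroots] at hprod
  simp only [Multiset.insert_eq_cons, Multiset.map_cons, Multiset.map_singleton,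
    Multiset.prod_cons, Multiset.prod_singleton] at hprod
  have hexp : (X - C z₁)*((X - C z₂)*(X - C z₃))
      = X^3 + C (-(z₁+z₂+z₃))*X^2 + C (z₁*z₂+z₁*z₃+z₂*z₃)*X + C (-(z₁*z₂*z₃)) := by
    simp only [C_neg, C_add, C_mul]
    ring
  rw [hexp] at hprod
  obtain ⟨e1, e2, e3⟩ := cubic_coeff_extract _ _ _ _ _ _ hprod
  exact ⟨z₁, z₂, z₃, hroots, e1, e2, e3⟩

lemma map_cubic (a b c : ℝ) :
    (X^3 + C a*X^2 + C b*X + C c).map (algebraMap ℝ ℂ)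
      = X^3 + C (a:ℂ)*X^2 + C (b:ℂ)*X + C (c:ℂ) := by
  simp [Polynomial.map_add, Polynomial.map_mul, Polynomial.map_pow]

lemma root_eq (a b c : ℝ) (z : ℂ)
    (hz : z ∈ ((X^3 + C a*X^2 + C b*X + C c : Polynomial ℝ).map (algebraMap ℝ ℂ)).roots) :
    z^3 + (a:ℂ)*z^2 + (b:ℂ)*z + (c:ℂ) = 0 := by
  rw [map_cubic] at hz
  have := (Polynomial.mem_roots'.1 hz).2
  simpa [Polynomial.IsRoot, eval_add, eval_mul, eval_pow, eval_C, eval_X] using this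

lemma ev_pos1 (k a0 : ℝ) (hk : 0 < k) : ∃ Y : ℝ, 1 ≤ Y ∧ ∀ y, Y ≤ y → 0 < k*y + a0 := by
  refine ⟨max 1 ((|a0|+1)/k), le_max_left _ _, fun y hy => ?_⟩
  have h2 : (|a0|+1)/k ≤ y := le_trans (le_max_right _ _) hy
  have h3 : |a0|+1 ≤ k*y := by rwa [div_le_iff₀ hk, mul_comm] at h2
  nlinarith [neg_abs_le a0]

lemma ev_pos3 (k p q r : ℝ) (hk : 0 < k) :
    ∃ Y : ℝ, 1 ≤ Y ∧ ∀ y, Y ≤ y → 0 < k*y^3 + p*y^2 + q*y + r := by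
  refine ⟨max 1 ((|p|+|q|+|r|+1)/k), le_max_left _ _, fun y hy => ?_⟩
  have hy1 : 1 ≤ y := le_trans (le_max_left _ _) hy
  have hy0 : 0 ≤ y := by linarith
  have h2 : (|p|+|q|+|r|+1)/k ≤ y := le_trans (le_max_right _ _) hy
  have hky : |p|+|q|+|r|+1 ≤ k*y := by rwa [div_le_iff₀ hk, mul_comm] at h2
  have hyy : y ≤ y^2 := by nlinarith
  have f1 : (|p|+|q|+|r|+1)*y^2 ≤ (k*y)*y^2 := mul_le_mul_of_nonneg_right hky (sq_nonneg y)
  have f2 : (-|p|)*y^2 ≤ p*y^2 := mul_le_mul_of_nonneg_right (neg_abs_le p) (sq_nonneg y)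
  have f3 : (-|q|)*y ≤ q*y := mul_le_mul_of_nonneg_right (neg_abs_le q) hy0
  have f4 : |q| * y ≤ |q| * y^2 := mul_le_mul_of_nonneg_left hyy (abs_nonneg q)
  have f5 : -|r| ≤ r := neg_abs_le r
  have f6 : |r| ≤ |r| * y^2 := by nlinarith [abs_nonneg r]
  nlinarith [sq_nonneg y]

end Helpers

theorem stable_for_small_and_large_y
    (J : Matrix (Fin 3) (Fin 3) ℝ) (d₁ d₂ d₃ : ℝ)
    (hd₁ : 0 < d₁) (hd₂ : 0 < d₂) (hd₃ : 0 < d₃)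
    (hJ : ∀ z ∈ eigs J, z.re < 0) :
    ∃ y₀ y₁ : ℝ, 0 < y₀ ∧ y₀ < y₁ ∧
      ∀ y : ℝ, (y ∈ Set.Icc 0 y₀ ∨ y₁ ≤ y) →
        ∀ z ∈ eigs (J - y • Matrix.diagonal ![d₁, d₂, d₃]), z.re < 0 := by
  -- coefficient constants
  set s1 : ℝ := d₁ + d₂ + d₃ with hs1
  set a0 : ℝ := -(J 0 0 + J 1 1 + J 2 2) with ha0
  set s2 : ℝ := d₁*d₂ + d₁*d₃ + d₂*d₃ with hs2
  set b1 : ℝ := -(J 0 0*(d₂+d₃) + J 1 1*(d₁+d₃) + J 2 2*(d₁+d₂)) with hb1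
  set b0 : ℝ := J 0 0*J 1 1 - J 0 1*J 1 0 + J 0 0*J 2 2 - J 0 2*J 2 0 + J 1 1*J 2 2 - J 1 2*J 2 1 with hb0
  set s3 : ℝ := d₁*d₂*d₃ with hs3
  set c2 : ℝ := -(J 0 0*d₂*d₃ + J 1 1*d₁*d₃ + J 2 2*d₁*d₂) with hc2
  set c1 : ℝ := J 0 0*J 1 1*d₃ + J 0 0*J 2 2*d₂ + J 1 1*J 2 2*d₁
      - d₁*(J 1 2*J 2 1) - d₃*(J 0 1*J 1 0) - d₂*(J 0 2*J 2 0) with hc1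
  set c0 : ℝ := -(J 0 0*J 1 1*J 2 2 - J 0 0*J 1 2*J 2 1 - J 0 1*J 1 0*J 2 2
      + J 0 1*J 1 2*J 2 0 + J 0 2*J 1 0*J 2 1 - J 0 2*J 1 1*J 2 0) with hc0
  set A : ℝ → ℝ := fun y => s1*y + a0 with hA
  set B : ℝ → ℝ := fun y => s2*y^2 + b1*y + b0 with hB
  set Cf : ℝ → ℝ := fun y => s3*y^3 + c2*y^2 + c1*y + c0 with hCf
  -- the characteristic polynomial of J(y)
  have hchar : ∀ y : ℝ, (J - y • Matrix.diagonal ![d₁, d₂, d₃]).charpoly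
      = X^3 + C (A y) * X^2 + C (B y) * X + C (Cf y) := by
    intro y
    set M := J - y • Matrix.diagonal ![d₁, d₂, d₃] with hM
    have e00 : M 0 0 = J 0 0 - y * d₁ := by
      simp [hM, Matrix.sub_apply, Matrix.smul_apply, Matrix.diagonal_apply, smul_eq_mul]
    have e11 : M 1 1 = J 1 1 - y * d₂ := by
      simp [hM, Matrix.sub_apply, Matrix.smul_apply, Matrix.diagonal_apply, smul_eq_mul]
    have e22 : M 2 2 = J 2 2 - y * d₃ := by
      simp [hM, Matrix.sub_apply, Matrix.smul_apply, Matrix.diagonal_apply, smul_eq_mul]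
    have e01 : M 0 1 = J 0 1 := by
      simp [hM, Matrix.sub_apply, Matrix.smul_apply, Matrix.diagonal_apply, smul_eq_mul]
    have e02 : M 0 2 = J 0 2 := by
      simp [hM, Matrix.sub_apply, Matrix.smul_apply, Matrix.diagonal_apply, smul_eq_mul]
    have e10 : M 1 0 = J 1 0 := by
      simp [hM, Matrix.sub_apply, Matrix.smul_apply, Matrix.diagonal_apply, smul_eq_mul]
    have e12 : M 1 2 = J 1 2 := by
      simp [hM, Matrix.sub_apply, Matrix.smul_apply, Matrix.diagonal_apply, smul_eq_mul]
    have e20 : M 2 0 = J 2 0 := by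
      simp [hM, Matrix.sub_apply, Matrix.smul_apply, Matrix.diagonal_apply, smul_eq_mul]
    have e21 : M 2 1 = J 2 1 := by
      simp [hM, Matrix.sub_apply, Matrix.smul_apply, Matrix.diagonal_apply, smul_eq_mul]
    rw [charpoly_fin3 M, e00, e11, e22, e01, e02, e10, e12, e20, e21]
    have r1 : -(J 0 0 - y * d₁ + (J 1 1 - y * d₂) + (J 2 2 - y * d₃)) = A y := by
      rw [hA]; dsimp only; rw [hs1, ha0]; ring
    have r2 : (J 0 0 - y * d₁)*(J 1 1 - y * d₂) - J 0 1*J 1 0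
        + (J 0 0 - y * d₁)*(J 2 2 - y * d₃) - J 0 2*J 2 0
        + (J 1 1 - y * d₂)*(J 2 2 - y * d₃) - J 1 2*J 2 1 = B y := by
      rw [hB]; dsimp only; rw [hs2, hb1, hb0]; ring
    have r3 : -((J 0 0 - y * d₁)*(J 1 1 - y * d₂)*(J 2 2 - y * d₃)
        - (J 0 0 - y * d₁)*J 1 2*J 2 1 - J 0 1*J 1 0*(J 2 2 - y * d₃)
        + J 0 1*J 1 2*J 2 0 + J 0 2*J 1 0*J 2 1 - J 0 2*(J 1 1 - y * d₂)*J 2 0) = Cf y := by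
      rw [hCf]; dsimp only; rw [hs3, hc2, hc1, hc0]; ring
    rw [r1, r2, r3]
  -- conditions at y = 0
  have hJ0 : J - (0:ℝ) • Matrix.diagonal ![d₁, d₂, d₃] = J := by simp
  have hchar0 : J.charpoly = X^3 + C (A 0) * X^2 + C (B 0) * X + C (Cf 0) := by
    rw [← hJ0]; exact hchar 0
  have hcond0 : 0 < A 0 ∧ 0 < Cf 0 ∧ Cf 0 < A 0 * B 0 := by
    obtain ⟨z₁, z₂, z₃, hroots, v1, v2, v3⟩ := roots_cubic ((A 0 : ℝ) : ℂ) ((B 0 : ℝ) : ℂ) ((Cf 0 : ℝ) : ℂ)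
    have heigs : eigs J = {z₁, z₂, z₃} := by
      unfold eigs
      rw [hchar0, map_cubic, hroots]
    have m1 : z₁ ∈ eigs J := by rw [heigs]; simp
    have m2 : z₂ ∈ eigs J := by rw [heigs]; simp
    have m3 : z₃ ∈ eigs J := by rw [heigs]; simp
    exact forward_hurwitz (A 0) (B 0) (Cf 0) z₁ z₂ z₃ v1 v2 v3 (hJ z₁ m1) (hJ z₂ m2) (hJ z₃ m3)
  -- continuity near 0
  have hAc : Continuous A := by rw [hA]; fun_prop
  have hBc : Continuous B := by rw [hB]; fun_prop
  have hCc : Continuous Cf := by rw [hCf]; fun_prop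
  set f : ℝ → ℝ := fun y => min (A y) (min (Cf y) (A y * B y - Cf y)) with hfdef
  have hfc : Continuous f := by
    apply Continuous.min hAc
    apply Continuous.min hCc
    exact (hAc.mul hBc).sub hCc
  have hf0 : 0 < f 0 := by
    rw [hfdef]; dsimp only
    exact lt_min hcond0.1 (lt_min hcond0.2.1 (by linarith [hcond0.2.2]))
  have hev : ∀ᶠ y in nhds (0:ℝ), 0 < f y :=
    (hfc.tendsto 0).eventually (eventually_gt_nhds hf0)
  obtain ⟨ε, hε, hball⟩ := Metric.eventually_nhds_iff.1 hev
  -- large y behaviour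
  have hs1p : 0 < s1 := by rw [hs1]; linarith
  have hs3p : 0 < s3 := by rw [hs3]; positivity
  obtain ⟨Ya, hYa1, hYa⟩ := ev_pos1 s1 a0 hs1p
  obtain ⟨Yc, hYc1, hYc⟩ := ev_pos3 s3 c2 c1 c0 hs3p
  have hk3 : 0 < s1*s2 - s3 := by rw [hs1, hs2, hs3]; nlinarith [mul_pos hd₁ hd₂, mul_pos hd₂ hd₃, mul_pos hd₁ hd₃, mul_pos (mul_pos hd₁ hd₂) hd₃, mul_pos (mul_pos hd₁ hd₁) hd₂]
  obtain ⟨Yab, hYab1, hYab⟩ := ev_pos3 (s1*s2 - s3) (s1*b1 + a0*s2 - c2) (s1*b0 + a0*b1 - c1) (a0*b0 - c0) hk3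
  have habid : ∀ y : ℝ, A y * B y - Cf y
      = (s1*s2 - s3)*y^3 + (s1*b1 + a0*s2 - c2)*y^2 + (s1*b0 + a0*b1 - c1)*y + (a0*b0 - c0) := by
    intro y; rw [hA, hB, hCf]; dsimp only; ring
  -- choose y₀ y₁
  set y₀ : ℝ := ε/2 with hy₀
  set y₁ : ℝ := max (max Ya Yc) Yab + y₀ + 1 with hy₁
  have hy₀pos : 0 < y₀ := by rw [hy₀]; positivity
  have hy₀lt : y₀ < y₁ := by
    rw [hy₁]
    have : (0:ℝ) < max (max Ya Yc) Yab := lt_of_lt_of_le one_pos (le_trans (le_trans hYa1 (le_max_left _ _)) (le_max_left _ _))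
    linarith
  refine ⟨y₀, y₁, hy₀pos, hy₀lt, ?_⟩
  intro y hy z hz
  have hcond : 0 < A y ∧ 0 < Cf y ∧ Cf y < A y * B y := by
    rcases hy with hsm | hlg
    · have hd : dist y 0 < ε := by
        rw [Real.dist_eq, sub_zero, abs_of_nonneg hsm.1]
        have := hsm.2
        rw [hy₀] at this
        linarith
      have := hball hd
      rw [hfdef] at this; dsimp only at this
      refine ⟨lt_of_lt_of_le this (min_le_left _ _), lt_of_lt_of_le this ((min_le_right _ _).trans (min_le_left _ _)), ?_⟩
      have := lt_of_lt_of_le this ((min_le_right _ _).trans (min_le_right _ _))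
      linarith
    · have hYa' : Ya ≤ y := by
        refine le_trans ?_ hlg
        rw [hy₁]
        have h1 : Ya ≤ max (max Ya Yc) Yab := le_trans (le_max_left _ _) (le_max_left _ _)
        linarith [hy₀pos]
      have hYc' : Yc ≤ y := by
        refine le_trans ?_ hlg
        rw [hy₁]
        have h1 : Yc ≤ max (max Ya Yc) Yab := le_trans (le_max_right _ _) (le_max_left _ _)
        linarith [hy₀pos]
      have hYab' : Yab ≤ y := by
        refine le_trans ?_ hlg
        rw [hy₁]
        have h1 : Yab ≤ max (max Ya Yc) Yab := le_max_right _ _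
        linarith [hy₀pos]
      refine ⟨hYa y hYa', hYc y hYc', ?_⟩
      have := hYab y hYab'
      rw [← habid y] at this
      linarith
  -- conclude via the Routh–Hurwitz criterion
  unfold eigs at hz
  rw [hchar y] at hz
  exact key_hurwitz (A y) (B y) (Cf y) hcond.1 hcond.2.1 hcond.2.2 z (root_eq _ _ _ z hz)
end

section
/- Let J be a 3×3 real matrix all of whose complex eigenvalues have negative real part, let d₁, d₂, d₃ > 0 be reals, and for y ≥ 0 set J(y) = J − y·diag(d₁, d₂, d₃). Define ã₃ = −d₁d₂d₃; ã₂ = d₁d₂J₃₃ + d₂d₃J₁₁ + d₃d₁J₂₂; ã₁ = −[d₁(J₂₂J₃₃−J₂₃J₃₂) + d₂(J₃₃J₁₁−J₃₁J₁₃) + d₃(J₁₁J₂₂−J₁₂J₂₁)]; ã₀ = det J. Then the system admits a Turing instability if and only if it does not admit a Turing–Hopf instability and all three inequalities hold: 0 < ã₂² − 3ã₁ã₃; 0 < ã₂ + √(ã₂² − 3ã₁ã₃); and 0 < 2ã₂³ + 2(ã₂² − 3ã₁ã₃)^{3/2} − 9ã₁ã₂ã₃ + 27ã₀ã₃². -/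
open Matrix Polynomial

/-- `Jmat J d₁ d₂ d₃ y = J - y • diag(d₁, d₂, d₃)`. -/
noncomputable def Jmat (J : Matrix (Fin 3) (Fin 3) ℝ) (d₁ d₂ d₃ y : ℝ) :
    Matrix (Fin 3) (Fin 3) ℝ :=
  J - y • Matrix.diagonal ![d₁, d₂, d₃]


def tr3 (M : Matrix (Fin 3) (Fin 3) ℝ) : ℝ := M 0 0 + M 1 1 + M 2 2
def m2 (M : Matrix (Fin 3) (Fin 3) ℝ) : ℝ :=
  (M 1 1 * M 2 2 - M 1 2 * M 2 1) + (M 0 0 * M 2 2 - M 0 2 * M 2 0)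
    + (M 0 0 * M 1 1 - M 0 1 * M 1 0)

theorem charpoly3 (M : Matrix (Fin 3) (Fin 3) ℝ) :
    M.charpoly = X ^ 3 - C (tr3 M) * X ^ 2 + C (m2 M) * X - C M.det := by
  rw [Matrix.charpoly, Matrix.det_fin_three]
  simp [charmatrix_apply_eq, charmatrix_apply_ne, Matrix.det_fin_three, tr3, m2,
    Fin.ext_iff, _root_.map_add, _root_.map_sub, _root_.map_mul]
  ring

theorem eigs_prod_eq (M : Matrix (Fin 3) (Fin 3) ℝ) :
    M.charpoly.map (algebraMap ℝ ℂ) = ((eigs M).map (fun r => X - C r)).prod := by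
  have hm : (M.charpoly.map (algebraMap ℝ ℂ)).Monic := M.charpoly_monic.map _
  exact (IsAlgClosed.splits _).eq_prod_roots_of_monic hm

theorem eigs_eval (M : Matrix (Fin 3) (Fin 3) ℝ) {r₁ r₂ r₃ : ℂ}
    (h : eigs M = {r₁, r₂, r₃}) (t : ℂ) :
    (t - r₁) * (t - r₂) * (t - r₃)
      = t^3 - (tr3 M : ℂ) * t^2 + (m2 M : ℂ) * t - (M.det : ℂ) := by
  have h1 := eigs_prod_eq M
  rw [h, charpoly3] at h1
  have h2 := congrArg (Polynomial.eval t) h1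
  simp only [Polynomial.eval_map] at h2 ⊢
  simp only [Multiset.insert_eq_cons, Multiset.map_cons, Multiset.map_singleton,
    Multiset.prod_cons, Multiset.prod_singleton, Polynomial.eval_mul, Polynomial.eval_sub,
    Polynomial.eval_add, Polynomial.eval_pow, Polynomial.eval_X, Polynomial.eval_C,
    Polynomial.eval₂_sub, Polynomial.eval₂_add, Polynomial.eval₂_mul, Polynomial.eval₂_pow,
    Polynomial.eval₂_X, Polynomial.eval₂_C] at h2
  simp only [Complex.coe_algebraMap] at h2
  linear_combination -h2

theorem eigs_vieta (M : Matrix (Fin 3) (Fin 3) ℝ) {r₁ r₂ r₃ : ℂ}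
    (h : eigs M = {r₁, r₂, r₃}) :
    r₁ + r₂ + r₃ = (tr3 M : ℂ) ∧ r₁*r₂ + r₁*r₃ + r₂*r₃ = (m2 M : ℂ)
      ∧ r₁*r₂*r₃ = (M.det : ℂ) := by
  have e0 := eigs_eval M h 0
  have e1 := eigs_eval M h 1
  have em1 := eigs_eval M h (-1)
  refine ⟨?_, ?_, ?_⟩
  · linear_combination e0 - (e1 + em1) / 2
  · linear_combination (e1 - em1) / 2
  · linear_combination -e0

theorem eigs_card (M : Matrix (Fin 3) (Fin 3) ℝ) : Multiset.card (eigs M) = 3 := by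
  have h2 : (M.charpoly.map (algebraMap ℝ ℂ)).natDegree = 3 := by
    rw [Polynomial.Monic.natDegree_map M.charpoly_monic]
    exact M.charpoly_natDegree_eq_dim.trans (by simp)
  have h3 : Multiset.card (M.charpoly.map (algebraMap ℝ ℂ)).roots
      = (M.charpoly.map (algebraMap ℝ ℂ)).natDegree :=
    Polynomial.splits_iff_card_roots.1 (IsAlgClosed.splits _)
  exact h3.trans h2


lemma pair_conj {w w' : ℂ} (h1 : (w + w').im = 0) (h2 : (w * w').im = 0) :
    w' = (starRingEnd ℂ) w ∨ (w.im = 0 ∧ w'.im = 0) := by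
  simp only [Complex.add_im, Complex.mul_im] at h1 h2
  by_cases h : w.im = 0
  · right; exact ⟨h, by linarith⟩
  · left
    have him : w'.im = -w.im := by linarith
    have hre : w'.re = w.re := by
      have : w.im * (w'.re - w.re) = 0 := by rw [him] at h2; ring_nf; ring_nf at h2; linarith
      rcases mul_eq_zero.1 this with h' | h'
      · exact absurd h' h
      · linarith
    apply Complex.ext <;> simp [Complex.conj_re, Complex.conj_im, hre, him]

def goodTriple (M : Matrix (Fin 3) (Fin 3) ℝ) (z : ℝ) (w w' : ℂ) : Prop :=
  eigs M = {(z:ℂ), w, w'} ∧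
  (w' = (starRingEnd ℂ) w ∨ (w.im = 0 ∧ w'.im = 0)) ∧
  ((z:ℂ) + w + w' = (tr3 M : ℂ)) ∧ ((z:ℂ)*w + (z:ℂ)*w' + w*w' = (m2 M : ℂ)) ∧
  ((z:ℂ)*w*w' = (M.det : ℂ))

theorem build (M : Matrix (Fin 3) (Fin 3) ℝ) (x : ℝ) (w w' : ℂ)
    (heq : eigs M = {(x:ℂ), w, w'}) : goodTriple M x w w' := by
  obtain ⟨hsum, he2, hprod⟩ := eigs_vieta M heq
  have h1 : (w + w').im = 0 := by
    have : w + w' = ((tr3 M - x : ℝ) : ℂ) := by push_cast; linear_combination hsum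
    rw [this]; exact Complex.ofReal_im _
  have h2 : (w * w').im = 0 := by
    have : w * w' = ((m2 M : ℝ) : ℂ) - (x:ℂ) * (w + w') := by linear_combination he2
    rw [this]
    simp [Complex.sub_im, Complex.mul_im, h1]
  exact ⟨heq, pair_conj h1 h2, hsum, he2, hprod⟩

theorem eigs_structure (M : Matrix (Fin 3) (Fin 3) ℝ) :
    ∃ (z : ℝ) (w w' : ℂ), goodTriple M z w w' := by
  obtain ⟨r₁, r₂, r₃, heq⟩ := Multiset.card_eq_three.1 (eigs_card M)
  obtain ⟨x, hx⟩ := cubic_real_root (-(tr3 M)) (m2 M) (-(M.det))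
  have hxC : ((x:ℂ) - r₁) * ((x:ℂ) - r₂) * ((x:ℂ) - r₃) = 0 := by
    rw [eigs_eval M heq]
    have := congrArg (fun t : ℝ => (t : ℂ)) hx
    push_cast at this ⊢
    linear_combination this
  have perm2 : ({r₁, r₂, r₃} : Multiset ℂ) = {r₂, r₁, r₃} := Multiset.cons_swap _ _ _
  have perm3 : ({r₁, r₂, r₃} : Multiset ℂ) = {r₃, r₁, r₂} := by
    show r₁ ::ₘ r₂ ::ₘ {r₃} = r₃ ::ₘ r₁ ::ₘ {r₂}
    rw [← Multiset.cons_zero r₃, ← Multiset.cons_zero r₂,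
      Multiset.cons_swap r₂ r₃, Multiset.cons_swap r₁ r₃]
  rcases mul_eq_zero.1 hxC with h | h
  · rcases mul_eq_zero.1 h with h | h
    · exact ⟨x, r₂, r₃, build M x r₂ r₃ (by rw [heq, sub_eq_zero.1 h])⟩
    · exact ⟨x, r₁, r₃, build M x r₁ r₃ (by rw [heq, perm2, sub_eq_zero.1 h])⟩
  · exact ⟨x, r₁, r₂, build M x r₁ r₂ (by rw [heq, perm3, sub_eq_zero.1 h])⟩

theorem eigs_structure_at (M : Matrix (Fin 3) (Fin 3) ℝ) {ζ : ℂ} (hζ : ζ ∈ eigs M)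
    (him : ζ.im = 0) :
    ∃ (z : ℝ) (w w' : ℂ), ζ = (z:ℂ) ∧ goodTriple M z w w' := by
  obtain ⟨z, w, w', heq, hpair, h1, h2, h3⟩ := eigs_structure M
  obtain ⟨x, hx⟩ : ∃ x : ℝ, ζ = (x:ℂ) := ⟨ζ.re, by apply Complex.ext <;> simp [him]⟩
  rw [heq] at hζ
  simp only [Multiset.insert_eq_cons, Multiset.mem_cons, Multiset.mem_singleton] at hζ
  rcases hζ with h | h | h
  · exact ⟨z, w, w', h, heq, hpair, h1, h2, h3⟩
  · have hw : w = (x:ℂ) := by rw [← h, hx]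
    have hwim : w.im = 0 := by rw [hw]; simp
    have hw'im : w'.im = 0 := by
      rcases hpair with hc | hc
      · rw [hc]; simp [hwim]
      · exact hc.2
    refine ⟨x, (z:ℂ), w', hx, ?_, Or.inr ⟨by simp, hw'im⟩, ?_, ?_, ?_⟩
    · rw [heq, hw]
      show (↑z) ::ₘ (↑x) ::ₘ {w'} = (↑x) ::ₘ (↑z) ::ₘ {w'}
      exact Multiset.cons_swap _ _ _
    · linear_combination h1 - hw
    · linear_combination h2 - ((z:ℂ) + w') * hw
    · linear_combination h3 - (z:ℂ) * w' * hw
  · have hw' : w' = (x:ℂ) := by rw [← h, hx]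
    have hw'im : w'.im = 0 := by rw [hw']; simp
    have hwim : w.im = 0 := by
      rcases hpair with hc | hc
      · have : w = (starRingEnd ℂ) w' := by rw [hc]; simp
        rw [this, hw']; simp
      · exact hc.1
    refine ⟨x, (z:ℂ), w, hx, ?_, Or.inr ⟨by simp, hwim⟩, ?_, ?_, ?_⟩
    · rw [heq, hw']
      show (↑z) ::ₘ w ::ₘ {(↑x:ℂ)} = (↑x:ℂ) ::ₘ (↑z) ::ₘ {w}
      rw [← Multiset.cons_zero (↑x:ℂ), ← Multiset.cons_zero w,
        Multiset.cons_swap w (↑x:ℂ), Multiset.cons_swap (↑z:ℂ) (↑x:ℂ)]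
    · linear_combination h1 - hw'
    · linear_combination h2 - ((z:ℂ) + w) * hw'
    · linear_combination h3 - (z:ℂ) * w * hw'

theorem triple_real {M : Matrix (Fin 3) (Fin 3) ℝ} {z : ℝ} {w w' : ℂ}
    (h : goodTriple M z w w') (him : w.im = 0) (him' : w'.im = 0) :
    ∃ r r' : ℝ, w = (r:ℂ) ∧ w' = (r':ℂ) ∧ eigs M = {(z:ℂ), (r:ℂ), (r':ℂ)} ∧
      z + r + r' = tr3 M ∧ z*r + z*r' + r*r' = m2 M ∧ z*r*r' = M.det := by
  obtain ⟨heq, _, h1, h2, h3⟩ := h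
  have hw : w = ((w.re : ℝ) : ℂ) := by apply Complex.ext <;> simp [him]
  have hw' : w' = ((w'.re : ℝ) : ℂ) := by apply Complex.ext <;> simp [him']
  refine ⟨w.re, w'.re, hw, hw', by rw [heq, ← hw, ← hw'], ?_, ?_, ?_⟩
  · rw [hw, hw'] at h1; exact_mod_cast h1
  · rw [hw, hw'] at h2; exact_mod_cast h2
  · rw [hw, hw'] at h3; exact_mod_cast h3

theorem triple_conj {M : Matrix (Fin 3) (Fin 3) ℝ} {z : ℝ} {w w' : ℂ}
    (h : goodTriple M z w w') (hc : w' = (starRingEnd ℂ) w) :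
    z + 2*w.re = tr3 M ∧ 2*z*w.re + w.re^2 + w.im^2 = m2 M ∧
      z*(w.re^2 + w.im^2) = M.det := by
  obtain ⟨heq, _, h1, h2, h3⟩ := h
  rw [hc] at h1 h2 h3
  refine ⟨?_, ?_, ?_⟩
  · have := congrArg Complex.re h1
    simp [Complex.add_re] at this
    linarith
  · have := congrArg Complex.re h2
    simp [Complex.add_re, Complex.mul_re] at this
    nlinarith [this]
  · have := congrArg Complex.re h3
    simp [Complex.mul_re, Complex.mul_im] at this
    nlinarith [this]

def aF (J : Matrix (Fin 3) (Fin 3) ℝ) (d₁ d₂ d₃ y : ℝ) : ℝ :=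
  -(tr3 J) + y * (d₁ + d₂ + d₃)
def bF (J : Matrix (Fin 3) (Fin 3) ℝ) (d₁ d₂ d₃ y : ℝ) : ℝ :=
  m2 J - y * (d₁*(J 1 1 + J 2 2) + d₂*(J 0 0 + J 2 2) + d₃*(J 0 0 + J 1 1))
    + y^2 * (d₁*d₂ + d₂*d₃ + d₃*d₁)
def cF (J : Matrix (Fin 3) (Fin 3) ℝ) (d₁ d₂ d₃ y : ℝ) : ℝ :=
  d₁*d₂*d₃*y^3 - (d₁*d₂*J 2 2 + d₂*d₃*J 0 0 + d₃*d₁*J 1 1)*y^2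
    + (d₁*(J 1 1*J 2 2 - J 1 2*J 2 1) + d₂*(J 2 2*J 0 0 - J 2 0*J 0 2)
        + d₃*(J 0 0*J 1 1 - J 0 1*J 1 0))*y - J.det
def gF (J : Matrix (Fin 3) (Fin 3) ℝ) (d₁ d₂ d₃ y : ℝ) : ℝ :=
  aF J d₁ d₂ d₃ y * bF J d₁ d₂ d₃ y - cF J d₁ d₂ d₃ y
def dF (J : Matrix (Fin 3) (Fin 3) ℝ) (d₁ d₂ d₃ y : ℝ) : ℝ :=
  18 * aF J d₁ d₂ d₃ y * bF J d₁ d₂ d₃ y * cF J d₁ d₂ d₃ y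
    - 4 * (aF J d₁ d₂ d₃ y)^3 * cF J d₁ d₂ d₃ y
    + (aF J d₁ d₂ d₃ y)^2 * (bF J d₁ d₂ d₃ y)^2
    - 4 * (bF J d₁ d₂ d₃ y)^3 - 27 * (cF J d₁ d₂ d₃ y)^2

theorem tr3_Jmat (J : Matrix (Fin 3) (Fin 3) ℝ) (d₁ d₂ d₃ y : ℝ) :
    tr3 (Jmat J d₁ d₂ d₃ y) = -(aF J d₁ d₂ d₃ y) := by
  simp [Jmat, tr3, aF, Matrix.sub_apply, Matrix.smul_apply, Matrix.diagonal_apply,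
    smul_eq_mul]
  ring

theorem m2_Jmat (J : Matrix (Fin 3) (Fin 3) ℝ) (d₁ d₂ d₃ y : ℝ) :
    m2 (Jmat J d₁ d₂ d₃ y) = bF J d₁ d₂ d₃ y := by
  simp [Jmat, m2, bF, Matrix.sub_apply, Matrix.smul_apply, Matrix.diagonal_apply,
    smul_eq_mul, Fin.ext_iff]
  ring

theorem det_Jmat (J : Matrix (Fin 3) (Fin 3) ℝ) (d₁ d₂ d₃ y : ℝ) :
    (Jmat J d₁ d₂ d₃ y).det = -(cF J d₁ d₂ d₃ y) := by
  rw [Matrix.det_fin_three]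
  simp [Jmat, cF, Matrix.sub_apply, Matrix.smul_apply, Matrix.diagonal_apply,
    smul_eq_mul, Fin.ext_iff, Matrix.det_fin_three]
  ring

theorem gF_cont (J : Matrix (Fin 3) (Fin 3) ℝ) (d₁ d₂ d₃ : ℝ) :
    Continuous (fun y => gF J d₁ d₂ d₃ y) := by
  unfold gF aF bF cF; fun_prop

theorem dF_cont (J : Matrix (Fin 3) (Fin 3) ℝ) (d₁ d₂ d₃ : ℝ) :
    Continuous (fun y => dF J d₁ d₂ d₃ y) := by
  unfold dF aF bF cF; fun_prop

-- scalar identity lemmas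
theorem g_real_id {a b c z r r' : ℝ} (h1 : z + r + r' = -a)
    (h2 : z*r + z*r' + r*r' = b) (h3 : z*r*r' = -c) :
    a*b - c = -((z+r)*(r+r')*(r'+z)) := by
  have ha : a = -(z+r+r') := by linarith
  have hc : c = -(z*r*r') := by linarith
  rw [ha, hc, ← h2]; ring

theorem g_conj_id {a b c z α β : ℝ} (h1 : z + 2*α = -a)
    (h2 : 2*z*α + α^2 + β^2 = b) (h3 : z*(α^2+β^2) = -c) :
    a*b - c = -(2*α*((z+α)^2+β^2)) := by
  have ha : a = -(z+2*α) := by linarith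
  have hc : c = -(z*(α^2+β^2)) := by linarith
  rw [ha, hc, ← h2]; ring

theorem disc_real_id {a b c z r r' : ℝ} (h1 : z + r + r' = -a)
    (h2 : z*r + z*r' + r*r' = b) (h3 : z*r*r' = -c) :
    18*a*b*c - 4*a^3*c + a^2*b^2 - 4*b^3 - 27*c^2 = ((z-r)*(r-r')*(r'-z))^2 := by
  have ha : a = -(z+r+r') := by linarith
  have hc : c = -(z*r*r') := by linarith
  rw [ha, hc, ← h2]; ring

theorem disc_conj_id {a b c z α β : ℝ} (h1 : z + 2*α = -a)
    (h2 : 2*z*α + α^2 + β^2 = b) (h3 : z*(α^2+β^2) = -c) :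
    18*a*b*c - 4*a^3*c + a^2*b^2 - 4*b^3 - 27*c^2 = -(4*β^2*((z-α)^2+β^2)^2) := by
  have ha : a = -(z+2*α) := by linarith
  have hc : c = -(z*(α^2+β^2)) := by linarith
  rw [ha, hc, ← h2]; ring

theorem cubic_hasDerivAt (A B C D u : ℝ) :
    HasDerivAt (fun y : ℝ => A*y^3 + B*y^2 + C*y + D) (3*A*u^2 + 2*B*u + C) u := by
  have h := (((hasDerivAt_pow 3 u).const_mul A).add
    ((hasDerivAt_pow 2 u).const_mul B)).add (((hasDerivAt_id u).const_mul C).add_const D)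
  have e : (fun y : ℝ => A*y^3 + B*y^2 + C*y + D)
      = ((fun y => A * y ^ 3) + fun y => B * y ^ 2) + fun x => C * id x + D := by
    funext y; simp only [Pi.add_apply, id]; ring
  rw [e]
  exact h.congr_deriv (by norm_num; ring)

theorem cubic_eventually_pos {g : ℝ → ℝ} (p3 p2 p1 p0 : ℝ)
    (hexp : ∀ y, g y = p3*y^3 + p2*y^2 + p1*y + p0) (h3 : 0 < p3) (y₀ : ℝ) :
    ∃ Y, y₀ < Y ∧ 0 < g Y := by
  set K := (|p2| + |p1| + |p0| + 1) / p3 with hK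
  set Y := 1 + max y₀ (max 1 K) with hYdef
  have h1 : y₀ ≤ max y₀ (max 1 K) := le_max_left _ _
  have h2 : (1:ℝ) ≤ max y₀ (max 1 K) := le_trans (le_max_left 1 K) (le_max_right _ _)
  have h4 : K ≤ max y₀ (max 1 K) := le_trans (le_max_right 1 K) (le_max_right _ _)
  have hYy₀ : y₀ < Y := by simp only [hYdef]; linarith
  have hY1 : (1:ℝ) ≤ Y := by simp only [hYdef]; linarith
  have hYK : K ≤ Y := by simp only [hYdef]; linarith
  have hYpos : 0 < Y := by linarith
  have hmul : |p2| + |p1| + |p0| + 1 ≤ p3 * Y := by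
    have := (div_le_iff₀ h3).1 hYK
    linarith [this]
  have hsq : 1 ≤ Y^2 := by nlinarith
  have hYle : Y ≤ Y^2 := by nlinarith
  refine ⟨Y, hYy₀, ?_⟩
  rw [hexp]
  have e1 : (|p2| + |p1| + |p0| + 1) * Y^2 ≤ (p3*Y) * Y^2 :=
    mul_le_mul_of_nonneg_right hmul (sq_nonneg Y)
  have e2 : -(|p1| * Y^2) ≤ p1 * Y := by
    have := mul_le_mul_of_nonneg_left hYle (abs_nonneg p1)
    nlinarith [neg_abs_le p1, abs_nonneg p1]
  have e3 : -(|p0| * Y^2) ≤ p0 := by nlinarith [neg_abs_le p0, abs_nonneg p0]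
  have e4 : -(|p2| * Y^2) ≤ p2 * Y^2 := by nlinarith [neg_abs_le p2, sq_nonneg Y]
  nlinarith [e1, e2, e3, e4]

theorem ivt_zero {g : ℝ → ℝ} (hg : Continuous g) {α β : ℝ} (hαβ : α ≤ β)
    (hα : 0 < g α) (hβ : g β < 0) :
    ∃ u, α < u ∧ u < β ∧ g u = 0 ∧ ∀ t, u < t → t ≤ β → g t < 0 := by
  set S := {y | y ∈ Set.Icc α β ∧ g y = 0} with hS
  have hcomp : IsCompact S := (isCompact_Icc).inter_right (isClosed_eq hg continuous_const)
  have hne : S.Nonempty := by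
    have h0 : (0:ℝ) ∈ Set.Icc (g β) (g α) := ⟨hβ.le, hα.le⟩
    obtain ⟨x, hx1, hx2⟩ := intermediate_value_Icc' hαβ hg.continuousOn h0
    exact ⟨x, hx1, hx2⟩
  set u := sSup S with hu
  have huS : u ∈ S := hcomp.sSup_mem hne
  have hgu : g u = 0 := huS.2
  have hbdd : BddAbove S := hcomp.bddAbove
  have hmono : ∀ t, u < t → t ≤ β → g t < 0 := by
    intro t hut htβ
    by_contra hcon
    push_neg at hcon
    rcases eq_or_lt_of_le hcon with he | hlt
    · have : t ∈ S := ⟨⟨le_trans huS.1.1 hut.le, htβ⟩, he.symm⟩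
      exact absurd (le_csSup hbdd this) (not_le.2 hut)
    · have htβ' : t ≤ β := htβ
      have h0 : (0:ℝ) ∈ Set.Icc (g β) (g t) := ⟨hβ.le, hlt.le⟩
      obtain ⟨x, hx1, hx2⟩ := intermediate_value_Icc' htβ' hg.continuousOn h0
      have : x ∈ S := ⟨⟨le_trans (le_trans huS.1.1 hut.le) hx1.1, hx1.2⟩, hx2⟩
      have := le_csSup hbdd this
      linarith [hx1.1]
  have huα : α < u := by
    rcases eq_or_lt_of_le huS.1.1 with he | h
    · exfalso; rw [← he] at hgu; linarith
    · exact h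
  have huβ : u < β := by
    rcases eq_or_lt_of_le huS.1.2 with he | h
    · exfalso; rw [he] at hgu; linarith
    · exact h
  exact ⟨u, huα, huβ, hgu, hmono⟩

theorem ivt_zero' {g : ℝ → ℝ} (hg : Continuous g) {α β : ℝ} (hαβ : α ≤ β)
    (hα : g α < 0) (hβ : 0 < g β) :
    ∃ v, α < v ∧ v < β ∧ g v = 0 ∧ ∀ t, α ≤ t → t < v → g t < 0 := by
  obtain ⟨u, h1, h2, h3, h4⟩ := ivt_zero (g := fun x => g (α + β - x)) (by fun_prop)
    hαβ (by simpa using hβ) (by simpa using hα)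
  refine ⟨α + β - u, by linarith, by linarith, by simpa using h3, ?_⟩
  intro t hαt htv
  have := h4 (α + β - t) (by linarith) (by linarith)
  simpa using this

/-- classification of the spectrum of `Jmat J d₁ d₂ d₃ y`. -/
theorem classify (J : Matrix (Fin 3) (Fin 3) ℝ) (d₁ d₂ d₃ y : ℝ) :
    (∃ z r r' : ℝ, eigs (Jmat J d₁ d₂ d₃ y) = {(z:ℂ), (r:ℂ), (r':ℂ)} ∧
       z + r + r' = -(aF J d₁ d₂ d₃ y) ∧ z*r + z*r' + r*r' = bF J d₁ d₂ d₃ y ∧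
       z*r*r' = -(cF J d₁ d₂ d₃ y))
    ∨ (∃ (z : ℝ) (w : ℂ), w.im ≠ 0 ∧
       eigs (Jmat J d₁ d₂ d₃ y) = {(z:ℂ), w, (starRingEnd ℂ) w} ∧
       z + 2*w.re = -(aF J d₁ d₂ d₃ y) ∧
       2*z*w.re + w.re^2 + w.im^2 = bF J d₁ d₂ d₃ y ∧
       z*(w.re^2 + w.im^2) = -(cF J d₁ d₂ d₃ y)) := by
  obtain ⟨z, w, w', htrip⟩ := eigs_structure (Jmat J d₁ d₂ d₃ y)
  have hpair := htrip.2.1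
  rcases hpair with hc | ⟨him, him'⟩
  · by_cases hβ : w.im = 0
    · left
      obtain ⟨r, r', _, _, heq, h1, h2, h3⟩ := triple_real htrip hβ (by rw [hc]; simp [hβ])
      rw [tr3_Jmat] at h1; rw [m2_Jmat] at h2; rw [det_Jmat] at h3
      exact ⟨z, r, r', heq, h1, h2, h3⟩
    · right
      obtain ⟨h1, h2, h3⟩ := triple_conj htrip hc
      rw [tr3_Jmat] at h1; rw [m2_Jmat] at h2; rw [det_Jmat] at h3
      exact ⟨z, w, hβ, by rw [← hc]; exact htrip.1, h1, h2, h3⟩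
  · left
    obtain ⟨r, r', _, _, heq, h1, h2, h3⟩ := triple_real htrip him him'
    rw [tr3_Jmat] at h1; rw [m2_Jmat] at h2; rw [det_Jmat] at h3
    exact ⟨z, r, r', heq, h1, h2, h3⟩

/-- pinned classification: if a real eigenvalue is known. -/
theorem classify_at (J : Matrix (Fin 3) (Fin 3) ℝ) (d₁ d₂ d₃ y : ℝ) {ζ : ℂ}
    (hζ : ζ ∈ eigs (Jmat J d₁ d₂ d₃ y)) (him : ζ.im = 0) :
    (∃ z r r' : ℝ, ζ = (z:ℂ) ∧ eigs (Jmat J d₁ d₂ d₃ y) = {(z:ℂ), (r:ℂ), (r':ℂ)} ∧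
       z + r + r' = -(aF J d₁ d₂ d₃ y) ∧ z*r + z*r' + r*r' = bF J d₁ d₂ d₃ y ∧
       z*r*r' = -(cF J d₁ d₂ d₃ y))
    ∨ (∃ (z : ℝ) (w : ℂ), ζ = (z:ℂ) ∧ w.im ≠ 0 ∧
       eigs (Jmat J d₁ d₂ d₃ y) = {(z:ℂ), w, (starRingEnd ℂ) w} ∧
       z + 2*w.re = -(aF J d₁ d₂ d₃ y) ∧
       2*z*w.re + w.re^2 + w.im^2 = bF J d₁ d₂ d₃ y ∧
       z*(w.re^2 + w.im^2) = -(cF J d₁ d₂ d₃ y)) := by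
  obtain ⟨z, w, w', hzζ, htrip⟩ := eigs_structure_at _ hζ him
  have hpair := htrip.2.1
  rcases hpair with hc | ⟨him1, him'⟩
  · by_cases hβ : w.im = 0
    · left
      obtain ⟨r, r', _, _, heq, h1, h2, h3⟩ := triple_real htrip hβ (by rw [hc]; simp [hβ])
      rw [tr3_Jmat] at h1; rw [m2_Jmat] at h2; rw [det_Jmat] at h3
      exact ⟨z, r, r', hzζ, heq, h1, h2, h3⟩
    · right
      obtain ⟨h1, h2, h3⟩ := triple_conj htrip hc
      rw [tr3_Jmat] at h1; rw [m2_Jmat] at h2; rw [det_Jmat] at h3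
      exact ⟨z, w, hzζ, hβ, by rw [← hc]; exact htrip.1, h1, h2, h3⟩
  · left
    obtain ⟨r, r', _, _, heq, h1, h2, h3⟩ := triple_real htrip him1 him'
    rw [tr3_Jmat] at h1; rw [m2_Jmat] at h2; rw [det_Jmat] at h3
    exact ⟨z, r, r', hzζ, heq, h1, h2, h3⟩

theorem sq_pos_ne {x : ℝ} (h : x ≠ 0) : 0 < x^2 := by
  rcases lt_or_gt_of_ne h with h' | h' <;> nlinarith

theorem Jmat_zero (J : Matrix (Fin 3) (Fin 3) ℝ) (d₁ d₂ d₃ : ℝ) :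
    Jmat J d₁ d₂ d₃ 0 = J := by simp [Jmat]

theorem stab (J : Matrix (Fin 3) (Fin 3) ℝ) (d₁ d₂ d₃ : ℝ)
    (hJ : ∀ ζ ∈ eigs J, ζ.re < 0) :
    0 < aF J d₁ d₂ d₃ 0 ∧ 0 < cF J d₁ d₂ d₃ 0 ∧ 0 < gF J d₁ d₂ d₃ 0 := by
  have hJ' : ∀ ζ ∈ eigs (Jmat J d₁ d₂ d₃ 0), ζ.re < 0 := by
    rw [Jmat_zero]; exact hJ
  rcases classify J d₁ d₂ d₃ 0 with ⟨z, r, r', heq, h1, h2, h3⟩ |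
    ⟨z, w, hβ, heq, h1, h2, h3⟩
  · have hz : z < 0 := by simpa using hJ' ((z:ℝ):ℂ) (by rw [heq]; simp)
    have hr : r < 0 := by simpa using hJ' ((r:ℝ):ℂ) (by rw [heq]; simp)
    have hr' : r' < 0 := by simpa using hJ' ((r':ℝ):ℂ) (by rw [heq]; simp)
    refine ⟨by linarith, by
      nlinarith [mul_pos (mul_pos (by linarith : (0:ℝ) < -z) (by linarith : (0:ℝ) < -r))
        (by linarith : (0:ℝ) < -r')], ?_⟩
    show 0 < aF J d₁ d₂ d₃ 0 * bF J d₁ d₂ d₃ 0 - cF J d₁ d₂ d₃ 0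
    rw [g_real_id h1 h2 h3]
    nlinarith [mul_pos (mul_pos (by linarith : (0:ℝ) < -(z+r)) (by linarith : (0:ℝ) < -(r+r'))) (by linarith : (0:ℝ) < -(r'+z))]
  · have hz : z < 0 := by simpa using hJ' ((z:ℝ):ℂ) (by rw [heq]; simp)
    have hα : w.re < 0 := hJ' w (by rw [heq]; simp)
    have hβ2 : 0 < w.im^2 := sq_pos_ne hβ
    refine ⟨by linarith, by nlinarith [sq_nonneg w.re], ?_⟩
    show 0 < aF J d₁ d₂ d₃ 0 * bF J d₁ d₂ d₃ 0 - cF J d₁ d₂ d₃ 0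
    rw [g_conj_id h1 h2 h3]
    nlinarith [sq_nonneg (z + w.re)]

theorem detpos_root (J : Matrix (Fin 3) (Fin 3) ℝ) (d₁ d₂ d₃ y : ℝ)
    (hdet : cF J d₁ d₂ d₃ y < 0) :
    ∃ ζ ∈ eigs (Jmat J d₁ d₂ d₃ y), 0 < ζ.re ∧ ζ.im = 0 := by
  rcases classify J d₁ d₂ d₃ y with ⟨z, r, r', heq, h1, h2, h3⟩ |
    ⟨z, w, hβ, heq, h1, h2, h3⟩
  · by_cases hz : 0 < z
    · exact ⟨(z:ℂ), by rw [heq]; simp, by simpa using hz, by simp⟩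
    by_cases hr : 0 < r
    · exact ⟨(r:ℂ), by rw [heq]; simp, by simpa using hr, by simp⟩
    have hr' : 0 < r' := by
      by_contra hcon
      push_neg at hz hr hcon
      nlinarith [mul_nonneg (mul_nonneg (by linarith : (0:ℝ) ≤ -z)
        (by linarith : (0:ℝ) ≤ -r)) (by linarith : (0:ℝ) ≤ -r')]
    exact ⟨(r':ℂ), by rw [heq]; simp, by simpa using hr', by simp⟩
  · have hβ2 : 0 < w.im^2 := sq_pos_ne hβ
    have hz : 0 < z := by nlinarith [sq_nonneg w.re]
    exact ⟨(z:ℂ), by rw [heq]; simp, by simpa using hz, by simp⟩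

theorem interior_disc (J : Matrix (Fin 3) (Fin 3) ℝ) (d₁ d₂ d₃ t : ℝ) (ht : 0 < t)
    (hB : ∀ ζ ∈ eigs (Jmat J d₁ d₂ d₃ t), 0 < ζ.re → ζ.im = 0)
    (hgt : gF J d₁ d₂ d₃ t < 0) : 0 ≤ dF J d₁ d₂ d₃ t := by
  rcases classify J d₁ d₂ d₃ t with ⟨z, r, r', heq, h1, h2, h3⟩ |
    ⟨z, w, hβ, heq, h1, h2, h3⟩
  · show 0 ≤ 18 * _ * _ * _ - 4*_^3*_ + _^2*_^2 - 4*_^3 - 27*_^2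
    rw [disc_real_id h1 h2 h3]; positivity
  · exfalso
    have hα : ¬ 0 < w.re := fun h => hβ (hB w (by rw [heq]; simp) h)
    push_neg at hα
    have : gF J d₁ d₂ d₃ t = -(2*w.re*((z+w.re)^2+w.im^2)) := g_conj_id h1 h2 h3
    nlinarith [sq_nonneg (z+w.re), sq_nonneg w.im]

theorem endpoint (J : Matrix (Fin 3) (Fin 3) ℝ) (d₁ d₂ d₃ p : ℝ)
    (ha : 0 < aF J d₁ d₂ d₃ p) (hgp : gF J d₁ d₂ d₃ p = 0)
    (hΔ : 0 ≤ dF J d₁ d₂ d₃ p) (hcp : 0 ≤ cF J d₁ d₂ d₃ p) :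
    cF J d₁ d₂ d₃ p = 0 := by
  rcases classify J d₁ d₂ d₃ p with ⟨z, r, r', heq, h1, h2, h3⟩ |
    ⟨z, w, hβ, heq, h1, h2, h3⟩
  · have hgid : aF J d₁ d₂ d₃ p * bF J d₁ d₂ d₃ p - cF J d₁ d₂ d₃ p
        = -((z+r)*(r+r')*(r'+z)) := g_real_id h1 h2 h3
    have hgp' : aF J d₁ d₂ d₃ p * bF J d₁ d₂ d₃ p - cF J d₁ d₂ d₃ p = 0 := hgp
    have hprod : (z+r)*(r+r')*(r'+z) = 0 := by linarith
    have hb : bF J d₁ d₂ d₃ p ≤ 0 := by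
      rcases mul_eq_zero.1 hprod with h | h
      · rcases mul_eq_zero.1 h with h' | h'
        · nlinarith [sq_nonneg r]
        · nlinarith [sq_nonneg r]
      · have e1 : (r'+z)*z = 0 := by rw [h]; ring
        have e2 : (r'+z)*r = 0 := by rw [h]; ring
        nlinarith [sq_nonneg z, e1, e2]
    have hcab : cF J d₁ d₂ d₃ p = aF J d₁ d₂ d₃ p * bF J d₁ d₂ d₃ p := by linarith
    nlinarith [mul_nonpos_of_nonneg_of_nonpos ha.le hb]
  · exfalso
    have hdid : dF J d₁ d₂ d₃ p = -(4*w.im^2*((z-w.re)^2+w.im^2)^2) :=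
      disc_conj_id h1 h2 h3
    have hβ2 : 0 < w.im^2 := sq_pos_ne hβ
    have hin : 0 < (z-w.re)^2+w.im^2 := by nlinarith [sq_nonneg (z-w.re)]
    nlinarith [pow_pos hin 2]

def cB (J : Matrix (Fin 3) (Fin 3) ℝ) (d₁ d₂ d₃ : ℝ) : ℝ :=
  -(d₁*d₂*J 2 2 + d₂*d₃*J 0 0 + d₃*d₁*J 1 1)
def cC (J : Matrix (Fin 3) (Fin 3) ℝ) (d₁ d₂ d₃ : ℝ) : ℝ :=
  d₁*(J 1 1*J 2 2 - J 1 2*J 2 1) + d₂*(J 2 2*J 0 0 - J 2 0*J 0 2)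
    + d₃*(J 0 0*J 1 1 - J 0 1*J 1 0)
def gP2 (J : Matrix (Fin 3) (Fin 3) ℝ) (d₁ d₂ d₃ : ℝ) : ℝ :=
  (-(tr3 J))*(d₁*d₂+d₂*d₃+d₃*d₁)
    - (d₁+d₂+d₃)*(d₁*(J 1 1+J 2 2)+d₂*(J 0 0+J 2 2)+d₃*(J 0 0+J 1 1))
    - cB J d₁ d₂ d₃
def gP1 (J : Matrix (Fin 3) (Fin 3) ℝ) (d₁ d₂ d₃ : ℝ) : ℝ :=
  (tr3 J)*(d₁*(J 1 1+J 2 2)+d₂*(J 0 0+J 2 2)+d₃*(J 0 0+J 1 1))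
    + (d₁+d₂+d₃)*(m2 J) - cC J d₁ d₂ d₃
def gP0 (J : Matrix (Fin 3) (Fin 3) ℝ) (d₁ d₂ d₃ : ℝ) : ℝ :=
  (-(tr3 J))*(m2 J) + J.det
theorem aF_lin (J : Matrix (Fin 3) (Fin 3) ℝ) (d₁ d₂ d₃ y : ℝ) :
    aF J d₁ d₂ d₃ y = aF J d₁ d₂ d₃ 0 + y*(d₁+d₂+d₃) := by unfold aF; ring
theorem cF_cubic (J : Matrix (Fin 3) (Fin 3) ℝ) (d₁ d₂ d₃ y : ℝ) :
    cF J d₁ d₂ d₃ y = (d₁*d₂*d₃)*y^3 + (cB J d₁ d₂ d₃)*y^2 + (cC J d₁ d₂ d₃)*y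
      + (-J.det) := by unfold cF cB cC; ring
theorem gF_cubic (J : Matrix (Fin 3) (Fin 3) ℝ) (d₁ d₂ d₃ y : ℝ) :
    gF J d₁ d₂ d₃ y = ((d₁+d₂)*(d₂+d₃)*(d₃+d₁))*y^3 + (gP2 J d₁ d₂ d₃)*y^2
      + (gP1 J d₁ d₂ d₃)*y + (gP0 J d₁ d₂ d₃) := by
  unfold gF aF bF cF gP2 gP1 gP0 cB cC; ring

theorem hard (J : Matrix (Fin 3) (Fin 3) ℝ) (d₁ d₂ d₃ : ℝ)
    (hd₁ : 0 < d₁) (hd₂ : 0 < d₂) (hd₃ : 0 < d₃)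
    (hJ : ∀ ζ ∈ eigs J, ζ.re < 0)
    (hB : ∀ y > (0:ℝ), ∀ ζ ∈ eigs (Jmat J d₁ d₂ d₃ y), 0 < ζ.re → ζ.im = 0)
    (hc : ∀ y, 0 ≤ y → 0 ≤ cF J d₁ d₂ d₃ y)
    (y₀ : ℝ) (hy₀ : 0 < y₀) (ζ : ℂ) (hζ : ζ ∈ eigs (Jmat J d₁ d₂ d₃ y₀))
    (hre : 0 < ζ.re) : False := by
  obtain ⟨ha0, hc0, hg0⟩ := stab J d₁ d₂ d₃ hJ
  have haF : ∀ y, 0 ≤ y → 0 < aF J d₁ d₂ d₃ y := by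
    intro y hy; rw [aF_lin]; nlinarith
  have hζim := hB y₀ hy₀ ζ hζ hre
  have hgy₀ : gF J d₁ d₂ d₃ y₀ < 0 := by
    rcases classify_at J d₁ d₂ d₃ y₀ hζ hζim with
      ⟨z, r, r', hzζ, heq, h1, h2, h3⟩ | ⟨z, w, hzζ, hβ, heq, h1, h2, h3⟩
    · have hz : 0 < z := by rw [hzζ] at hre; simpa using hre
      have hcy := hc y₀ hy₀.le
      have hay := haF y₀ hy₀.le
      have hrr' : r*r' ≤ 0 := by nlinarith
      have hA2 : (z+r)*(z+r') < 0 := by nlinarith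
      have hB2 : r + r' < 0 := by linarith
      show aF J d₁ d₂ d₃ y₀ * bF J d₁ d₂ d₃ y₀ - cF J d₁ d₂ d₃ y₀ < 0
      rw [g_real_id h1 h2 h3]
      nlinarith [mul_pos_of_neg_of_neg hB2 hA2]
    · exfalso
      have hz : 0 < z := by rw [hzζ] at hre; simpa using hre
      have hβ2 : 0 < w.im^2 := sq_pos_ne hβ
      have := hc y₀ hy₀.le
      nlinarith [sq_nonneg w.re]
  obtain ⟨Y, hYy₀, hgY⟩ := cubic_eventually_pos ((d₁+d₂)*(d₂+d₃)*(d₃+d₁))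
    (gP2 J d₁ d₂ d₃) (gP1 J d₁ d₂ d₃) (gP0 J d₁ d₂ d₃)
    (fun y => gF_cubic J d₁ d₂ d₃ y) (by positivity) y₀
  obtain ⟨u, hu0, huy₀, hgu, hult⟩ := ivt_zero (gF_cont J d₁ d₂ d₃) hy₀.le hg0 hgy₀
  obtain ⟨v, hy₀v, hvY, hgv, hvlt⟩ := ivt_zero' (gF_cont J d₁ d₂ d₃) hYy₀.le hgy₀ hgY
  have hneg : ∀ t, u < t → t < v → gF J d₁ d₂ d₃ t < 0 := by
    intro t h1t h2t
    rcases le_or_gt t y₀ with h | h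
    · exact hult t h1t h
    · exact hvlt t (by linarith) h2t
  have huv : u < v := by linarith
  have hvpos : 0 < v := by linarith
  have hΔu : 0 ≤ dF J d₁ d₂ d₃ u := by
    have htend : Filter.Tendsto (fun y => dF J d₁ d₂ d₃ y)
        (nhdsWithin u (Set.Ioi u)) (nhds (dF J d₁ d₂ d₃ u)) :=
      ((dF_cont J d₁ d₂ d₃).tendsto u).mono_left nhdsWithin_le_nhds
    refine ge_of_tendsto htend ?_
    filter_upwards [Ioo_mem_nhdsGT_of_mem (Set.left_mem_Ico.2 huv)] with t ht
    exact interior_disc J d₁ d₂ d₃ t (by linarith [ht.1])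
      (hB t (by linarith [ht.1])) (hneg t ht.1 ht.2)
  have hΔv : 0 ≤ dF J d₁ d₂ d₃ v := by
    have htend : Filter.Tendsto (fun y => dF J d₁ d₂ d₃ y)
        (nhdsWithin v (Set.Iio v)) (nhds (dF J d₁ d₂ d₃ v)) :=
      ((dF_cont J d₁ d₂ d₃).tendsto v).mono_left nhdsWithin_le_nhds
    refine ge_of_tendsto htend ?_
    filter_upwards [Ioo_mem_nhdsLT_of_mem (Set.right_mem_Ioc.2 huv)] with t ht
    exact interior_disc J d₁ d₂ d₃ t (by linarith [ht.1])
      (hB t (by linarith [ht.1])) (hneg t ht.1 ht.2)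
  have hcu : cF J d₁ d₂ d₃ u = 0 :=
    endpoint J d₁ d₂ d₃ u (haF u hu0.le) hgu hΔu (hc u hu0.le)
  have hcv : cF J d₁ d₂ d₃ v = 0 :=
    endpoint J d₁ d₂ d₃ v (haF v hvpos.le) hgv hΔv (hc v hvpos.le)
  have hfun : (fun y => cF J d₁ d₂ d₃ y)
      = fun y => (d₁*d₂*d₃)*y^3 + (cB J d₁ d₂ d₃)*y^2 + (cC J d₁ d₂ d₃)*y + (-J.det) := by
    funext y; exact cF_cubic J d₁ d₂ d₃ y
  have hder : ∀ x : ℝ, HasDerivAt (fun y => cF J d₁ d₂ d₃ y)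
      (3*(d₁*d₂*d₃)*x^2 + 2*(cB J d₁ d₂ d₃)*x + cC J d₁ d₂ d₃) x := by
    intro x; rw [hfun]; exact cubic_hasDerivAt _ _ _ _ x
  have hminu : IsLocalMin (fun y => cF J d₁ d₂ d₃ y) u := by
    have hmem : Set.Ioi (0:ℝ) ∈ nhds u := isOpen_Ioi.mem_nhds hu0
    filter_upwards [hmem] with t ht
    show cF J d₁ d₂ d₃ u ≤ cF J d₁ d₂ d₃ t
    rw [hcu]; exact hc t ht.le
  have hminv : IsLocalMin (fun y => cF J d₁ d₂ d₃ y) v := by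
    have hmem : Set.Ioi (0:ℝ) ∈ nhds v := isOpen_Ioi.mem_nhds hvpos
    filter_upwards [hmem] with t ht
    show cF J d₁ d₂ d₃ v ≤ cF J d₁ d₂ d₃ t
    rw [hcv]; exact hc t ht.le
  have hd2u : 3*(d₁*d₂*d₃)*u^2 + 2*(cB J d₁ d₂ d₃)*u + cC J d₁ d₂ d₃ = 0 :=
    hminu.hasDerivAt_eq_zero (hder u)
  have hd2v : 3*(d₁*d₂*d₃)*v^2 + 2*(cB J d₁ d₂ d₃)*v + cC J d₁ d₂ d₃ = 0 :=
    hminv.hasDerivAt_eq_zero (hder v)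
  have hEu : (d₁*d₂*d₃)*u^3 + (cB J d₁ d₂ d₃)*u^2 + (cC J d₁ d₂ d₃)*u + (-J.det) = 0 := by
    rw [← cF_cubic]; exact hcu
  have hEv : (d₁*d₂*d₃)*v^3 + (cB J d₁ d₂ d₃)*v^2 + (cC J d₁ d₂ d₃)*v + (-J.det) = 0 := by
    rw [← cF_cubic]; exact hcv
  have hkey : (d₁*d₂*d₃)*(u-v)^3 = 0 := by
    linear_combination (u-v)*hd2u + (u-v)*hd2v - 2*hEu + 2*hEv
  have hne : (u-v)^3 ≠ 0 := pow_ne_zero _ (sub_ne_zero.2 (ne_of_lt huv))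
  have : d₁*d₂*d₃ = 0 := by
    rcases mul_eq_zero.1 hkey with h | h
    · exact h
    · exact absurd h hne
  exact absurd this (by positivity)

-- h y = t₃ y³ + t₂ y² + t₁ y + t₀, t₃ < 0, t₀ < 0.

theorem caseA {t₀ t₁ t₂ t₃ : ℝ} (ht₃ : t₃ < 0) (ht₀ : t₀ < 0)
    (hD : t₂^2 - 3*t₁*t₃ ≤ 0) (y : ℝ) (hy : 0 ≤ y) :
    t₃*y^3 + t₂*y^2 + t₁*y + t₀ ≤ 0 := by
  have ht₁t₃ : 0 ≤ t₁*t₃ := by nlinarith [sq_nonneg t₂]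
  have hQ : t₃*y^2 + t₂*y + t₁ ≤ 0 := by nlinarith [sq_nonneg (2*t₃*y + t₂)]
  nlinarith

theorem caseB {t₀ t₁ t₂ t₃ : ℝ} (ht₃ : t₃ < 0) (ht₀ : t₀ < 0)
    (hD : 0 < t₂^2 - 3*t₁*t₃) (hE2 : t₂ + Real.sqrt (t₂^2 - 3*t₁*t₃) ≤ 0)
    (y : ℝ) (hy : 0 ≤ y) :
    t₃*y^3 + t₂*y^2 + t₁*y + t₀ ≤ 0 := by
  set s := Real.sqrt (t₂^2 - 3*t₁*t₃) with hs
  have hs0 : 0 < s := Real.sqrt_pos.2 hD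
  have hs2 : s^2 = t₂^2 - 3*t₁*t₃ := Real.sq_sqrt hD.le
  have ht₂ : t₂ ≤ -s := by linarith
  have ht₁ : t₁ ≤ 0 := by nlinarith
  nlinarith [mul_nonneg (mul_nonneg hy hy) hy, mul_nonneg hy hy]

theorem caseC {t₀ t₁ t₂ t₃ : ℝ} (ht₃ : t₃ < 0) (ht₀ : t₀ < 0)
    (hD : 0 < t₂^2 - 3*t₁*t₃) (hE2 : 0 < t₂ + Real.sqrt (t₂^2 - 3*t₁*t₃))
    (hE3 : 2*t₂^3 + 2*Real.sqrt (t₂^2 - 3*t₁*t₃)^3 - 9*t₁*t₂*t₃ + 27*t₀*t₃^2 ≤ 0)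
    (y : ℝ) (hy : 0 ≤ y) :
    t₃*y^3 + t₂*y^2 + t₁*y + t₀ ≤ 0 := by
  set s := Real.sqrt (t₂^2 - 3*t₁*t₃) with hs
  have hs0 : 0 < s := Real.sqrt_pos.2 hD
  have hs2 : s^2 = t₂^2 - 3*t₁*t₃ := Real.sq_sqrt hD.le
  set u := 3*t₃*y + t₂ with hu
  have hid : 27*t₃^2*(t₃*y^3 + t₂*y^2 + t₁*y + t₀)
      = (2*t₂^3 + 2*s^3 - 9*t₁*t₂*t₃ + 27*t₀*t₃^2) + (u+s)^2*(u-2*s) := by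
    linear_combination (9*t₃*y + 3*t₂)*hs2
  rcases le_or_gt (u - 2*s) 0 with hW | hW
  · have h1 : (u+s)^2*(u-2*s) ≤ 0 := mul_nonpos_of_nonneg_of_nonpos (sq_nonneg _) hW
    have ht₃2 : 0 < t₃^2 := by nlinarith
    by_contra hcon
    push_neg at hcon
    nlinarith [mul_pos ht₃2 hcon, hid, h1, hE3]
  · -- u > 2s : show h y ≤ t₀
    have hQ : t₃*y^2 + t₂*y + t₁ ≤ 0 := by
      nlinarith [sq_nonneg (2*t₂ + u), sq_nonneg (u - 2*s), sq_nonneg (u + 2*s)]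
    nlinarith

theorem caseD {t₀ t₁ t₂ t₃ : ℝ} (ht₃ : t₃ < 0)
    (hD : 0 < t₂^2 - 3*t₁*t₃) (hE2 : 0 < t₂ + Real.sqrt (t₂^2 - 3*t₁*t₃))
    (hE3 : 0 < 2*t₂^3 + 2*Real.sqrt (t₂^2 - 3*t₁*t₃)^3 - 9*t₁*t₂*t₃ + 27*t₀*t₃^2) :
    ∃ y : ℝ, 0 < y ∧ 0 < t₃*y^3 + t₂*y^2 + t₁*y + t₀ := by
  set s := Real.sqrt (t₂^2 - 3*t₁*t₃) with hs
  have hs0 : 0 < s := Real.sqrt_pos.2 hD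
  have hs2 : s^2 = t₂^2 - 3*t₁*t₃ := Real.sq_sqrt hD.le
  refine ⟨(t₂ + s)/(-(3*t₃)), div_pos hE2 (by linarith), ?_⟩
  set y := (t₂ + s)/(-(3*t₃)) with hy
  have h3t₃ : (3*t₃) ≠ 0 := by intro h; nlinarith
  have hne3 : t₃ ≠ 0 := ne_of_lt ht₃
  have hyval : 3*t₃*y + t₂ = -s := by
    rw [hy]; field_simp; ring
  have hval : 27*t₃^2*(t₃*y^3 + t₂*y^2 + t₁*y + t₀)
      = 2*t₂^3 + 2*s^3 - 9*t₁*t₂*t₃ + 27*t₀*t₃^2 := by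
    linear_combination ((3*t₃*y+t₂)^2 - (3*t₃*y+t₂)*s + s^2 - 3*(t₂^2-3*t₁*t₃))*hyval
      + (-3*s)*hs2
  have ht₃2 : 0 < t₃^2 := by nlinarith
  by_contra hcon
  push_neg at hcon
  nlinarith [mul_nonpos_of_nonneg_of_nonpos ht₃2.le hcon, hval, hE3]

theorem turing_iff_explicit_conditions
    (J : Matrix (Fin 3) (Fin 3) ℝ) (d₁ d₂ d₃ : ℝ)
    (hd₁ : 0 < d₁) (hd₂ : 0 < d₂) (hd₃ : 0 < d₃)
    (hJ : ∀ z ∈ eigs J, z.re < 0)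
    (ta₀ ta₁ ta₂ ta₃ : ℝ)
    (hta₃ : ta₃ = -(d₁ * d₂ * d₃))
    (hta₂ : ta₂ = d₁ * d₂ * J 2 2 + d₂ * d₃ * J 0 0 + d₃ * d₁ * J 1 1)
    (hta₁ : ta₁ = -(d₁ * (J 1 1 * J 2 2 - J 1 2 * J 2 1)
      + d₂ * (J 2 2 * J 0 0 - J 2 0 * J 0 2)
      + d₃ * (J 0 0 * J 1 1 - J 0 1 * J 1 0)))
    (hta₀ : ta₀ = J.det) :
    ((∃ y > (0 : ℝ), ∃ z ∈ eigs (Jmat J d₁ d₂ d₃ y), 0 < z.re) ∧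
        (∀ y > (0 : ℝ), ∀ z ∈ eigs (Jmat J d₁ d₂ d₃ y), 0 < z.re → z.im = 0)) ↔
      (¬(∃ y > (0 : ℝ), ∃ z ∈ eigs (Jmat J d₁ d₂ d₃ y), z.im ≠ 0 ∧ 0 < z.re) ∧
        (0 < ta₂ ^ 2 - 3 * ta₁ * ta₃ ∧
         0 < ta₂ + Real.sqrt (ta₂ ^ 2 - 3 * ta₁ * ta₃) ∧
         0 < 2 * ta₂ ^ 3 + 2 * Real.sqrt (ta₂ ^ 2 - 3 * ta₁ * ta₃) ^ 3
              - 9 * ta₁ * ta₂ * ta₃ + 27 * ta₀ * ta₃ ^ 2)) := by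
  have hcf : ∀ y : ℝ, cF J d₁ d₂ d₃ y = -(ta₃*y^3 + ta₂*y^2 + ta₁*y + ta₀) := by
    intro y; rw [hta₃, hta₂, hta₁, hta₀]; unfold cF; ring
  have hta3neg : ta₃ < 0 := by
    have : 0 < d₁*d₂*d₃ := by positivity
    rw [hta₃]; linarith
  obtain ⟨ha0, hc0, hg0⟩ := stab J d₁ d₂ d₃ hJ
  have hta0neg : ta₀ < 0 := by
    have h0 : cF J d₁ d₂ d₃ 0 = -(ta₀) := by rw [hcf]; ring
    linarith [h0 ▸ hc0]
  constructor
  · rintro ⟨hA, hBc⟩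
    refine ⟨?_, ?_⟩
    · rintro ⟨y, hy, z, hz, him, hre⟩
      exact him (hBc y hy z hz hre)
    · have hex : ∃ y, 0 < y ∧ cF J d₁ d₂ d₃ y < 0 := by
        by_contra hcon
        push_neg at hcon
        have hc' : ∀ y, 0 ≤ y → 0 ≤ cF J d₁ d₂ d₃ y := by
          intro y hy
          rcases eq_or_lt_of_le hy with he | h
          · rw [← he]; exact hc0.le
          · exact hcon y h
        obtain ⟨y, hy, z, hz, hre⟩ := hA
        exact hard J d₁ d₂ d₃ hd₁ hd₂ hd₃ hJ hBc hc' y hy z hz hre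
      obtain ⟨y', hy', hcy'⟩ := hex
      have hhy' : 0 < ta₃*y'^3 + ta₂*y'^2 + ta₁*y' + ta₀ := by
        rw [hcf] at hcy'; linarith
      have hD : 0 < ta₂^2 - 3*ta₁*ta₃ := by
        by_contra hDc; push_neg at hDc
        linarith [caseA hta3neg hta0neg hDc y' hy'.le]
      have hE2 : 0 < ta₂ + Real.sqrt (ta₂^2 - 3*ta₁*ta₃) := by
        by_contra hE2c; push_neg at hE2c
        linarith [caseB hta3neg hta0neg hD hE2c y' hy'.le]
      have hE3 : 0 < 2*ta₂^3 + 2*Real.sqrt (ta₂^2 - 3*ta₁*ta₃)^3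
          - 9*ta₁*ta₂*ta₃ + 27*ta₀*ta₃^2 := by
        by_contra hE3c; push_neg at hE3c
        linarith [caseC hta3neg hta0neg hD hE2 hE3c y' hy'.le]
      refine ⟨by linarith [hD], by linarith [hE2], by linarith [hE3]⟩
  · rintro ⟨hNoTH, hD, hE2, hE3⟩
    have hB : ∀ y > (0:ℝ), ∀ z ∈ eigs (Jmat J d₁ d₂ d₃ y), 0 < z.re → z.im = 0 := by
      intro y hy z hz hre
      by_contra him
      exact hNoTH ⟨y, hy, z, hz, him, hre⟩
    refine ⟨?_, hB⟩
    have hD' : 0 < ta₂^2 - 3*ta₁*ta₃ := by linarith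
    have hE2' : 0 < ta₂ + Real.sqrt (ta₂^2 - 3*ta₁*ta₃) := by linarith
    have hE3' : 0 < 2*ta₂^3 + 2*Real.sqrt (ta₂^2 - 3*ta₁*ta₃)^3
        - 9*ta₁*ta₂*ta₃ + 27*ta₀*ta₃^2 := by linarith
    obtain ⟨y, hy, hpos⟩ := caseD hta3neg hD' hE2' hE3'
    have hcneg : cF J d₁ d₂ d₃ y < 0 := by rw [hcf]; linarith
    obtain ⟨ζ, hζ, hre, _⟩ := detpos_root J d₁ d₂ d₃ y hcneg
    exact ⟨y, hy, ζ, hζ, hre⟩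
end
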